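/- Let ρ : (0,b) → ℝ be differentiable with ρ' + ρ² ≥ -κ for a fixed κ ∈ ℝ, and suppose ρ(t) → ∞ as t → 0⁺. Then ct_κ(t) ≤ ρ(t) for all t ∈ (0, min(b, π_κ)). -/

import Mathlib

/-- The generalised sine function `sn_κ`. -/
noncomputable def snK (κ t : ℝ) : ℝ :=
  if 0 < κ then Real.sin (Real.sqrt κ * t) / Real.sqrt κ
  else if κ = 0 then t
  else Real.sinh (Real.sqrt (-κ) * t) / Real.sqrt (-κ)

/-- The derivative `sn_κ'` of the generalised sine function. -/
noncomputable def snK' (κ t : ℝ) : ℝ :=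
  if 0 < κ then Real.cos (Real.sqrt κ * t)
  else if κ = 0 then 1
  else Real.cosh (Real.sqrt (-κ) * t)

/-- The generalised cotangent `ct_κ = sn_κ' / sn_κ`. -/
noncomputable def ctK (κ t : ℝ) : ℝ := snK' κ t / snK κ t

lemma hasDerivAt_snK (κ t : ℝ) : HasDerivAt (snK κ) (snK' κ t) t := by
  unfold snK snK'
  rcases lt_trichotomy 0 κ with hκ | hκ | hκ
  · simp only [if_pos hκ]
    have hne : Real.sqrt κ ≠ 0 := ne_of_gt (Real.sqrt_pos.2 hκ)
    have h1 : HasDerivAt (fun t : ℝ => Real.sqrt κ * t) (Real.sqrt κ) t := by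
      simpa using (hasDerivAt_id t).const_mul (Real.sqrt κ)
    have h2 := ((Real.hasDerivAt_sin (Real.sqrt κ * t)).comp t h1).div_const (Real.sqrt κ)
    refine h2.congr_deriv (Eq.symm ?_)
    field_simp
  · simp only [if_neg (by linarith : ¬ 0 < κ), if_pos hκ.symm]
    exact hasDerivAt_id t
  · have h0 : ¬ 0 < κ := by linarith
    have h0' : κ ≠ 0 := by linarith
    simp only [if_neg h0, if_neg h0']
    have hne : Real.sqrt (-κ) ≠ 0 := ne_of_gt (Real.sqrt_pos.2 (by linarith))
    have h1 : HasDerivAt (fun t : ℝ => Real.sqrt (-κ) * t) (Real.sqrt (-κ)) t := by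
      simpa using (hasDerivAt_id t).const_mul (Real.sqrt (-κ))
    have h2 := ((Real.hasDerivAt_sinh (Real.sqrt (-κ) * t)).comp t h1).div_const (Real.sqrt (-κ))
    refine h2.congr_deriv (Eq.symm ?_)
    field_simp

lemma hasDerivAt_snK' (κ t : ℝ) : HasDerivAt (snK' κ) (-κ * snK κ t) t := by
  unfold snK snK'
  rcases lt_trichotomy 0 κ with hκ | hκ | hκ
  · simp only [if_pos hκ]
    have hsq : Real.sqrt κ * Real.sqrt κ = κ := Real.mul_self_sqrt hκ.le
    have hne : Real.sqrt κ ≠ 0 := ne_of_gt (Real.sqrt_pos.2 hκ)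
    have h1 : HasDerivAt (fun t : ℝ => Real.sqrt κ * t) (Real.sqrt κ) t := by
      simpa using (hasDerivAt_id t).const_mul (Real.sqrt κ)
    have h2 := (Real.hasDerivAt_cos (Real.sqrt κ * t)).comp t h1
    refine h2.congr_deriv (Eq.symm ?_)
    field_simp
    ring_nf
    rw [Real.sq_sqrt hκ.le]
  · simp only [if_neg (by linarith : ¬ 0 < κ), if_pos hκ.symm, ← hκ]
    simpa using hasDerivAt_const t (1:ℝ)
  · have h0 : ¬ 0 < κ := by linarith
    have h0' : κ ≠ 0 := by linarith
    simp only [if_neg h0, if_neg h0']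
    have hsq : Real.sqrt (-κ) * Real.sqrt (-κ) = -κ := Real.mul_self_sqrt (by linarith)
    have hne : Real.sqrt (-κ) ≠ 0 := ne_of_gt (Real.sqrt_pos.2 (by linarith))
    have h1 : HasDerivAt (fun t : ℝ => Real.sqrt (-κ) * t) (Real.sqrt (-κ)) t := by
      simpa using (hasDerivAt_id t).const_mul (Real.sqrt (-κ))
    have h2 := (Real.hasDerivAt_cosh (Real.sqrt (-κ) * t)).comp t h1
    refine h2.congr_deriv (Eq.symm ?_)
    field_simp
    ring_nf
    rw [Real.sq_sqrt (by linarith : (0:ℝ) ≤ -κ)]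
    ring

lemma snK_pos {κ t : ℝ} (ht : 0 < t) (hπ : 0 < κ → t < Real.pi / Real.sqrt κ) :
    0 < snK κ t := by
  unfold snK
  rcases lt_trichotomy 0 κ with hκ | hκ | hκ
  · simp only [if_pos hκ]
    have hs : 0 < Real.sqrt κ := Real.sqrt_pos.2 hκ
    have h1 : Real.sqrt κ * t < Real.pi := by
      have := hπ hκ
      rw [lt_div_iff₀ hs] at this
      linarith [this]
    exact div_pos (Real.sin_pos_of_pos_of_lt_pi (by positivity) h1) hs
  · simp only [if_neg (by linarith : ¬ 0 < κ), if_pos hκ.symm]; exact ht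
  · have h0 : ¬ 0 < κ := by linarith
    have h0' : κ ≠ 0 := by linarith
    simp only [if_neg h0, if_neg h0']
    have hs : 0 < Real.sqrt (-κ) := Real.sqrt_pos.2 (by linarith)
    exact div_pos (by positivity ) hs

lemma hasDerivAt_ctK {κ t : ℝ} (h : snK κ t ≠ 0) :
    HasDerivAt (ctK κ) (-(ctK κ t)^2 - κ) t := by
  have hd := (hasDerivAt_snK' κ t).div (hasDerivAt_snK κ t) h
  refine hd.congr_deriv (Eq.symm ?_)
  unfold ctK
  field_simp
  ring

lemma continuousAt_ctK {κ t : ℝ} (h : snK κ t ≠ 0) : ContinuousAt (ctK κ) t :=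
  (hasDerivAt_ctK h).continuousAt


/-- Riccati comparison estimate, second part: if `ρ' + ρ² ≥ -κ` on `(0, b)` and
`ρ t → ∞` as `t → 0⁺`, then `ct_κ ≤ ρ` on `(0, min b π_κ)`, where `π_κ = π / √κ`
for `κ > 0` and `π_κ = ∞` otherwise. -/
theorem riccati_comparison_lower (κ b : ℝ) (hb : 0 < b) (ρ ρ' : ℝ → ℝ)
    (hderiv : ∀ t ∈ Set.Ioo 0 b, HasDerivAt ρ (ρ' t) t)
    (hineq : ∀ t ∈ Set.Ioo 0 b, -κ ≤ ρ' t + (ρ t) ^ 2)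
    (hlim : Filter.Tendsto ρ (nhdsWithin 0 (Set.Ioi 0)) Filter.atTop) :
    ∀ t ∈ Set.Ioo 0 b, (0 < κ → t < Real.pi / Real.sqrt κ) → ctK κ t ≤ ρ t := by
  intro t ht hπ
  obtain ⟨ht0, htb⟩ := ht
  have hsnt : 0 < snK κ t := snK_pos ht0 hπ
  have key : ∀ ε : ℝ, 0 < ε → (0 < κ → t + ε < Real.pi / Real.sqrt κ) →
      ctK κ (t + ε) ≤ ρ t := by
    intro ε hε hπε
    set B : ℝ := if 0 < κ then Real.pi / Real.sqrt κ - ε else b with hB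
    have htB : t < B := by
      by_cases hκ : 0 < κ
      · simp only [hB, if_pos hκ]; linarith [hπε hκ]
      · simp only [hB, if_neg hκ]; exact htb
    set c : ℝ := min b B with hc
    have htc : t < c := lt_min htb htB
    set V : Set ℝ := Set.Ioo 0 c with hV
    have hVopen : IsOpen V := isOpen_Ioo
    have hmemb : ∀ s ∈ V, s ∈ Set.Ioo 0 b :=
      fun s hs => ⟨hs.1, lt_of_lt_of_le hs.2 (min_le_left _ _)⟩
    have hsn : ∀ s ∈ V, 0 < snK κ (s + ε) := by
      intro s hs
      apply snK_pos (by linarith [hs.1])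
      intro hκ
      have h2 : s < B := lt_of_lt_of_le hs.2 (min_le_right _ _)
      simp only [hB, if_pos hκ] at h2
      linarith
    have hctd : ∀ s ∈ V, HasDerivAt (fun u => ctK κ (u + ε)) (-(ctK κ (s + ε))^2 - κ) s := by
      intro s hs
      have := (hasDerivAt_ctK (ne_of_gt (hsn s hs))).comp s ((hasDerivAt_id s).add_const ε)
      exact this.congr_deriv (mul_one _)
    set f : ℝ → ℝ := fun s => ρ s + ctK κ (s + ε) with hf
    have hfc : ∀ s ∈ V, ContinuousAt f s := by
      intro s hs
      exact ((hderiv s (hmemb s hs)).continuousAt).add (hctd s hs).continuousAt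
    have hfcOn : ContinuousOn f V := fun s hs => (hfc s hs).continuousWithinAt
    -- choose the point a near 0
    have h0ε : 0 < snK κ (0 + ε) := by
      rw [zero_add]
      exact snK_pos hε (fun hκ => by linarith [hπε hκ])
    have hctε : ContinuousAt (fun a : ℝ => ctK κ (a + ε)) 0 := by
      have hadd : ContinuousAt (fun a : ℝ => a + ε) 0 := continuousAt_id.add continuousAt_const
      exact ContinuousAt.comp (f := fun a : ℝ => a + ε) (g := ctK κ) (x := (0:ℝ))
        (continuousAt_ctK (ne_of_gt h0ε)) hadd
    have hev1 : ∀ᶠ a in nhdsWithin 0 (Set.Ioi 0), ctK κ (a + ε) < ρ a := by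
      have h1 : ∀ᶠ a in nhdsWithin (0:ℝ) (Set.Ioi 0), ctK κ (a + ε) < ctK κ (0 + ε) + 1 :=
        (hctε.tendsto.mono_left nhdsWithin_le_nhds).eventually_lt_const (by linarith)
      have h2 : ∀ᶠ a in nhdsWithin (0:ℝ) (Set.Ioi 0), ctK κ (0 + ε) + 1 < ρ a :=
        hlim.eventually_gt_atTop _
      filter_upwards [h1, h2] with a ha1 ha2
      linarith
    have hev2 : ∀ᶠ a in nhdsWithin (0:ℝ) (Set.Ioi 0), a ∈ Set.Ioo (0:ℝ) t := by
      have : Set.Ioo (0:ℝ) t ∈ nhdsWithin 0 (Set.Ioi 0) :=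
        mem_nhdsWithin.2 ⟨Set.Iio t, isOpen_Iio, ht0, fun x hx => ⟨hx.2, hx.1⟩⟩
      exact this
    obtain ⟨a, haρ, ha0, hat⟩ := (hev1.and hev2).exists
    have haV : Set.Icc a t ⊆ V :=
      fun s hs => ⟨lt_of_lt_of_le ha0 hs.1, lt_of_le_of_lt hs.2 htc⟩
    set P : ℝ → ℝ := fun s => ∫ u in a..s, f u with hP
    have hPd : ∀ s ∈ Set.Icc a t, HasDerivAt P (f s) s := by
      intro s hs
      apply intervalIntegral.integral_hasDerivAt_right
      · apply (hfcOn.mono ?_).intervalIntegrable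
        rw [Set.uIcc_of_le hs.1]
        exact subset_trans (Set.Icc_subset_Icc_right hs.2) haV
      · exact hfcOn.stronglyMeasurableAtFilter hVopen s (haV hs)
      · exact hfc s (haV hs)
    set F : ℝ → ℝ := fun s => (ρ s - ctK κ (s + ε)) * Real.exp (P s) with hF
    have hFd : ∀ s ∈ Set.Icc a t,
        HasDerivAt F (Real.exp (P s) * (ρ' s + (ρ s)^2 + κ)) s := by
      intro s hs
      have hsV := haV hs
      have h1 : HasDerivAt (fun u => ρ u - ctK κ (u + ε))
          (ρ' s - (-(ctK κ (s + ε))^2 - κ)) s :=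
        (hderiv s (hmemb s hsV)).sub (hctd s hsV)
      have h2 : HasDerivAt (fun u => Real.exp (P u)) (Real.exp (P s) * f s) s := by
        exact (Real.hasDerivAt_exp (P s)).comp s (hPd s hs)
      have h3 := h1.mul h2
      refine h3.congr_deriv (Eq.symm ?_)
      simp only [hf]
      ring
    have hmono : MonotoneOn F (Set.Icc a t) := by
      apply monotoneOn_of_deriv_nonneg (convex_Icc a t)
      · exact fun s hs => (hFd s hs).continuousAt.continuousWithinAt
      · intro s hs
        rw [interior_Icc] at hs
        exact (hFd s (Set.Ioo_subset_Icc_self hs)).differentiableAt.differentiableWithinAt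
      · intro s hs
        rw [interior_Icc] at hs
        rw [(hFd s (Set.Ioo_subset_Icc_self hs)).deriv]
        have hq := hineq s (hmemb s (haV (Set.Ioo_subset_Icc_self hs)))
        have hexp := Real.exp_pos (P s)
        nlinarith
    have halet : a ≤ t := hat.le
    have h1 := hmono (Set.left_mem_Icc.2 halet) (Set.right_mem_Icc.2 halet) halet
    have hFa : F a = ρ a - ctK κ (a + ε) := by
      simp [hF, hP, intervalIntegral.integral_same]
    have hFt : 0 < F t := lt_of_lt_of_le (by rw [hFa]; linarith) h1
    have hexp := Real.exp_pos (P t)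
    simp only [hF] at hFt
    nlinarith
  have hcont : ContinuousAt (ctK κ) t := continuousAt_ctK (ne_of_gt hsnt)
  have hlim2 : Filter.Tendsto (fun ε : ℝ => ctK κ (t + ε)) (nhdsWithin 0 (Set.Ioi 0))
      (nhds (ctK κ t)) := by
    have h0 : Filter.Tendsto (fun ε : ℝ => t + ε) (nhdsWithin 0 (Set.Ioi 0)) (nhds t) := by
      have h1 : Filter.Tendsto (fun ε : ℝ => t + ε) (nhds 0) (nhds (t + 0)) :=
        (continuous_const.add continuous_id).tendsto 0
      simpa using h1.mono_left nhdsWithin_le_nhds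
    exact hcont.tendsto.comp h0
  apply le_of_tendsto hlim2
  have hev : ∀ᶠ ε in nhdsWithin (0:ℝ) (Set.Ioi 0),
      0 < ε ∧ (0 < κ → t + ε < Real.pi / Real.sqrt κ) := by
    by_cases hκ : 0 < κ
    · have hlt : (0:ℝ) < Real.pi / Real.sqrt κ - t := by linarith [hπ hκ]
      have hmem : Set.Ioo (0:ℝ) (Real.pi / Real.sqrt κ - t) ∈ nhdsWithin (0:ℝ) (Set.Ioi 0) :=
        mem_nhdsWithin.2 ⟨Set.Iio _, isOpen_Iio, hlt, fun x hx => ⟨hx.2, hx.1⟩⟩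
      filter_upwards [hmem] with ε hε
      exact ⟨hε.1, fun _ => by linarith [hε.2]⟩
    · filter_upwards [self_mem_nhdsWithin] with ε hε
      exact ⟨hε, fun h => absurd h hκ⟩
  filter_upwards [hev] with ε hε
  exact key ε hε.1 hε.2
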